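/- For all nonnegative integers n and m, the following identity holds in ℚ(q): Σ_{k=0}^{⌊n/3⌋} (−1)^k · q^{C(n−3k,2)} · [m+1 choose n−3k]_q · [m+k choose m]_{q^3} = Σ_{k=0}^{n} cos((2k−n)π/3) · [m+n−k choose m]_q · [m+k choose m]_q. -/

import Mathlib

/-- The Gaussian (q-)binomial coefficient `[a choose b]` with parameter `x`,
`∏_{j=1}^{b} (1 - x^{a-b+j})/(1 - x^j)`, an element of `ℚ(q)` when `x = q`;
it is zero when `b > a`. -/
noncomputable def qbinom (x : RatFunc ℚ) (a b : ℕ) : RatFunc ℚ :=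
  if b ≤ a then ∏ j ∈ Finset.range b, (1 - x ^ (a - b + j + 1)) / (1 - x ^ (j + 1)) else 0

/-- The indeterminate `q` of the field of rational functions `ℚ(q)`. -/
noncomputable def q : RatFunc ℚ := RatFunc.X

lemma q_pow_ne_one (d : ℕ) (hd : 1 ≤ d) : q ^ d ≠ 1 := by
  intro h
  have hX : (Polynomial.X : Polynomial ℚ) ^ d = 1 := by
    apply RatFunc.algebraMap_injective ℚ
    simpa [q, ← RatFunc.algebraMap_X, map_pow] using h
  have := congrArg Polynomial.natDegree hX
  simp [Polynomial.natDegree_X_pow] at this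
  omega

lemma one_sub_q_pow_ne (d : ℕ) (hd : 1 ≤ d) : (1 : RatFunc ℚ) - q ^ d ≠ 0 := by
  intro h
  exact q_pow_ne_one d hd (sub_eq_zero.mp h).symm

lemma qbinom_zero_right (x : RatFunc ℚ) (a : ℕ) : qbinom x a 0 = 1 := by
  simp [qbinom]

lemma qbinom_eq_zero (x : RatFunc ℚ) {a b : ℕ} (h : a < b) : qbinom x a b = 0 := by
  simp [qbinom, Nat.not_le.mpr h]

section Pascal
variable {x : RatFunc ℚ}
def HX (x : RatFunc ℚ) : Prop := ∀ d : ℕ, 1 ≤ d → (1 : RatFunc ℚ) - x ^ d ≠ 0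

lemma qbinom_eq (a b : ℕ) (h : b ≤ a) :
    qbinom x a b = (∏ j ∈ Finset.range b, (1 - x ^ (a - b + j + 1))) /
      (∏ j ∈ Finset.range b, (1 - x ^ (j + 1))) := by
  rw [qbinom, if_pos h, Finset.prod_div_distrib]

lemma den_ne_zero (hx : HX x) (b : ℕ) : (∏ j ∈ Finset.range b, ((1:RatFunc ℚ) - x ^ (j + 1))) ≠ 0 :=
  Finset.prod_ne_zero_iff.mpr fun j _ => hx (j+1) (Nat.le_add_left 1 j)

lemma qbinom_self (hx : HX x) (a : ℕ) : qbinom x a a = 1 := by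
  rw [qbinom, if_pos le_rfl]
  apply Finset.prod_eq_one
  intro j _
  rw [Nat.sub_self, Nat.zero_add, div_self (hx (j+1) (Nat.le_add_left 1 j))]

lemma qbinom_L1 (hx : HX x) (a b : ℕ) (h : b ≤ a) :
    qbinom x (a+1) (b+1) * (1 - x ^ (b+1)) = qbinom x a b * (1 - x ^ (a+1)) := by
  rw [qbinom_eq (a+1) (b+1) (by omega), qbinom_eq a b h]
  have e1 : ∀ j, a + 1 - (b + 1) + j + 1 = a - b + j + 1 := by omega
  simp only [e1]
  rw [Finset.prod_range_succ, Finset.prod_range_succ]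
  have e2 : a - b + b + 1 = a + 1 := by omega
  rw [e2]
  field_simp
  exact mul_div_mul_right _ _ (hx (b+1) (by omega))

lemma qbinom_L2 (hx : HX x) (a b : ℕ) (h : b ≤ a) :
    qbinom x a (b+1) * (1 - x ^ (b+1)) = qbinom x a b * (1 - x ^ (a - b)) := by
  rcases eq_or_lt_of_le h with rfl | hlt
  · rw [qbinom_eq_zero x (by omega), Nat.sub_self, pow_zero, sub_self, mul_zero, zero_mul]
  · rw [qbinom_eq a (b+1) (by omega), qbinom_eq a b h]
    have e1 : ∀ j, a - (b + 1) + j + 1 = a - b + j := by omega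
    simp only [e1]
    rw [Finset.prod_range_succ' (fun j => (1:RatFunc ℚ) - x ^ (a - b + j)),
      Finset.prod_range_succ (fun j => (1:RatFunc ℚ) - x ^ (j + 1))]
    have e3 : ∀ j, a - b + (j+1) = a - b + j + 1 := fun j => by omega
    simp only [e3]
    have hd := den_ne_zero (x := x) hx b
    have hb1 := hx (b+1) (by omega)
    field_simp
    ring

lemma qbinom_pascalA (hx : HX x) (a b : ℕ) :
    qbinom x (a+1) (b+1) = qbinom x a b + x ^ (b+1) * qbinom x a (b+1) := by
  rcases le_or_gt b a with h | h
  · have h1 := qbinom_L1 hx a b h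
    have h2 := qbinom_L2 hx a b h
    have hb1 := hx (b+1) (by omega)
    have hxp : x ^ (b+1) * x ^ (a - b) = x ^ (a+1) := by
      rw [← pow_add]; congr 1; omega
    apply mul_right_cancel₀ hb1
    calc qbinom x (a+1) (b+1) * (1 - x ^ (b+1)) = qbinom x a b * (1 - x ^ (a+1)) := h1
      _ = (qbinom x a b + x ^ (b+1) * qbinom x a (b+1)) * (1 - x ^ (b+1)) := by
          linear_combination (-x^(b+1)) * h2 + qbinom x a b * hxp
  · rw [qbinom_eq_zero x (by omega : a < b), qbinom_eq_zero x (by omega : a < b+1),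
      qbinom_eq_zero x (by omega : a + 1 < b + 1)]
    ring

lemma qbinom_pascalB (hx : HX x) (a b : ℕ) :
    qbinom x (a+1) (b+1) = qbinom x a (b+1) + x ^ (a - b) * qbinom x a b := by
  rcases le_or_gt b a with h | h
  · have h1 := qbinom_L1 hx a b h
    have h2 := qbinom_L2 hx a b h
    have hb1 := hx (b+1) (by omega)
    have hxp : x ^ (a - b) * x ^ (b+1) = x ^ (a+1) := by
      rw [← pow_add]; congr 1; omega
    apply mul_right_cancel₀ hb1
    calc qbinom x (a+1) (b+1) * (1 - x ^ (b+1)) = qbinom x a b * (1 - x ^ (a+1)) := h1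
      _ = (qbinom x a (b+1) + x ^ (a - b) * qbinom x a b) * (1 - x ^ (b+1)) := by
          linear_combination (-1 : RatFunc ℚ) * h2 + qbinom x a b * hxp
  · rw [qbinom_eq_zero x (by omega : a < b), qbinom_eq_zero x (by omega : a < b+1),
      qbinom_eq_zero x (by omega : a + 1 < b + 1)]
    ring

end Pascal

noncomputable abbrev Rw : Type := AdjoinRoot (Polynomial.X ^ 2 + Polynomial.X + 1 : Polynomial (RatFunc ℚ))

noncomputable def ι : RatFunc ℚ →+* Rw := algebraMap _ _

noncomputable def ω : Rw := AdjoinRoot.root _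

lemma hω : ω ^ 2 + ω + 1 = 0 := by
  have h := AdjoinRoot.eval₂_root (Polynomial.X ^ 2 + Polynomial.X + 1 : Polynomial (RatFunc ℚ))
  simpa [ω, AdjoinRoot.of] using h

lemma hω3 : ω ^ 3 = 1 := by
  linear_combination (ω - 1) * hω

instance : Nontrivial Rw := by
  apply AdjoinRoot.nontrivial
  have h2 : (Polynomial.X ^ 2 + Polynomial.X + 1 : Polynomial (RatFunc ℚ)).degree = 2 := by
    compute_degree!
  rw [h2]; decide

lemma ι_inj : Function.Injective ι := ι.injective

lemma hxq : HX q := fun d hd => one_sub_q_pow_ne d hd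

lemma hxq3 : HX (q ^ 3) := by
  intro d hd
  rw [← pow_mul]
  exact one_sub_q_pow_ne (3 * d) (by omega)

open PowerSeries

noncomputable def Dser (α : Rw) (m : ℕ) : PowerSeries Rw :=
  PowerSeries.mk fun k => ι (qbinom q (m + k) m) * α ^ k

noncomputable def Bser (m : ℕ) : PowerSeries Rw :=
  PowerSeries.mk fun t => if 3 ∣ t then ι (qbinom (q ^ 3) (m + t / 3) m) else 0

lemma geom (c : Rw) :
    (PowerSeries.mk fun k => c ^ k) * (1 - PowerSeries.C (R := Rw) c * PowerSeries.X) = 1 := by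
  ext n
  rw [mul_sub, mul_one, map_sub]
  have h : (PowerSeries.mk fun k => c ^ k) * (PowerSeries.C (R := Rw) c * PowerSeries.X)
      = (PowerSeries.C (R := Rw) c * PowerSeries.mk fun k => c ^ k) * PowerSeries.X := by ring
  rw [h]
  cases n with
  | zero => simp
  | succ n => simp [PowerSeries.coeff_succ_mul_X, pow_succ, mul_comm]

lemma geom3 :
    (PowerSeries.mk fun t => if 3 ∣ t then (1 : Rw) else 0) * (1 - PowerSeries.X ^ 3) = 1 := by
  ext n
  rw [mul_sub, mul_one, map_sub, PowerSeries.coeff_mul_X_pow']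
  rcases Nat.lt_or_ge n 3 with h | h
  · rw [if_neg (by omega)]
    interval_cases n <;> simp <;> omega
  · rw [if_pos (by omega), PowerSeries.coeff_mk, PowerSeries.coeff_mk, PowerSeries.coeff_one]
    have hd : 3 ∣ n ↔ 3 ∣ (n - 3) := by omega
    by_cases h3 : 3 ∣ n
    · rw [if_pos h3, if_pos (hd.mp h3), if_neg (by omega)]; ring
    · rw [if_neg h3, if_neg (fun hh => h3 (hd.mpr hh)), if_neg (by omega)]; ring

lemma Dser_step (α : Rw) (m : ℕ) :
    Dser α (m+1) * (1 - PowerSeries.C (R := Rw) (α * ι q ^ (m+1)) * PowerSeries.X) = Dser α m := by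
  ext t
  rw [mul_sub, mul_one, map_sub]
  have h : Dser α (m+1) * (PowerSeries.C (R := Rw) (α * ι q ^ (m+1)) * PowerSeries.X)
      = (PowerSeries.C (R := Rw) (α * ι q ^ (m+1)) * Dser α (m+1)) * PowerSeries.X := by ring
  rw [h]
  cases t with
  | zero =>
      simp only [PowerSeries.coeff_zero_mul_X, sub_zero, Dser, PowerSeries.coeff_mk, Nat.add_zero]
      rw [qbinom_self hxq, qbinom_self hxq]
  | succ t =>
      rw [PowerSeries.coeff_succ_mul_X]
      simp only [Dser, PowerSeries.coeff_mk, PowerSeries.coeff_C_mul]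
      have e1 : m + 1 + (t + 1) = (m + t + 1) + 1 := by omega
      have e2 : m + (t + 1) = m + t + 1 := by omega
      have e3 : m + 1 + t = m + t + 1 := by omega
      rw [e1, e2, e3, qbinom_pascalA hxq (m + t + 1) m]
      simp only [map_add, map_mul, map_pow]
      ring

lemma Fact2a (α : Rw) (m : ℕ) :
    Dser α m * ∏ j ∈ Finset.range (m+1), (1 - PowerSeries.C (R := Rw) (α * ι q ^ j) * PowerSeries.X) = 1 := by
  induction m with
  | zero =>
      rw [Finset.prod_range_one]
      have h0 : Dser α 0 = PowerSeries.mk fun k => α ^ k := by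
        ext k
        simp [Dser, qbinom_zero_right]
      rw [h0, pow_zero, mul_one]
      exact geom α
  | succ m ih =>
      rw [Finset.prod_range_succ, mul_comm (∏ j ∈ Finset.range (m+1), _), ← mul_assoc,
        Dser_step, ih]

lemma Bser_step (m : ℕ) :
    Bser (m+1) * (1 - PowerSeries.C (R := Rw) (ι (q^3) ^ (m+1)) * PowerSeries.X ^ 3) = Bser m := by
  ext t
  rw [mul_sub, mul_one, map_sub]
  have h : Bser (m+1) * (PowerSeries.C (R := Rw) (ι (q^3) ^ (m+1)) * PowerSeries.X ^ 3)
      = (PowerSeries.C (R := Rw) (ι (q^3) ^ (m+1)) * Bser (m+1)) * PowerSeries.X ^ 3 := by ring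
  rw [h, PowerSeries.coeff_mul_X_pow']
  simp only [Bser, PowerSeries.coeff_mk, PowerSeries.coeff_C_mul]
  by_cases h3 : 3 ∣ t
  · rcases Nat.lt_or_ge t 3 with hlt | hge
    · have ht0 : t = 0 := by omega
      subst ht0
      simp [qbinom_self hxq3]
    · obtain ⟨u, rfl⟩ : ∃ u, t = 3 * (u + 1) := by
        obtain ⟨v, rfl⟩ := h3; exact ⟨v - 1, by omega⟩
      rw [if_pos (by omega : 3 ≤ 3 * (u + 1)), if_pos h3, if_pos h3,
        if_pos (by omega : 3 ∣ 3 * (u+1) - 3)]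
      have e1 : 3 * (u + 1) / 3 = u + 1 := by omega
      have e2 : (3 * (u + 1) - 3) / 3 = u := by omega
      rw [e1, e2]
      have f1 : m + 1 + (u + 1) = (m + u + 1) + 1 := by omega
      have f2 : m + (u + 1) = m + u + 1 := by omega
      have f3 : m + 1 + u = m + u + 1 := by omega
      rw [f1, f2, f3, qbinom_pascalA hxq3 (m + u + 1) m]
      simp only [map_add, map_mul, map_pow]
      ring
  · rw [if_neg h3, if_neg h3]
    rcases Nat.lt_or_ge t 3 with hlt | hge
    · rw [if_neg (show ¬ 3 ≤ t by omega)]; ring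
    · rw [if_pos (show 3 ≤ t from hge), if_neg (show ¬ 3 ∣ t - 3 by omega)]; ring

lemma Fact2b (m : ℕ) :
    Bser m * ∏ j ∈ Finset.range (m+1), (1 - PowerSeries.C (R := Rw) (ι (q^3) ^ j) * PowerSeries.X ^ 3) = 1 := by
  induction m with
  | zero =>
      rw [Finset.prod_range_one]
      have h0 : Bser 0 = PowerSeries.mk fun t => if 3 ∣ t then (1 : Rw) else 0 := by
        ext t
        simp only [Bser, PowerSeries.coeff_mk]
        by_cases h3 : 3 ∣ t
        · rw [if_pos h3, if_pos h3, qbinom_zero_right, map_one]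
        · rw [if_neg h3, if_neg h3]
      rw [h0, pow_zero, map_one, one_mul]
      exact geom3
  | succ m ih =>
      rw [Finset.prod_range_succ, mul_comm (∏ j ∈ Finset.range (m+1), _), ← mul_assoc,
        Bser_step, ih]

lemma Fact1 (M : ℕ) : ∀ a : ℕ,
    PowerSeries.coeff (R := Rw) a (∏ j ∈ Finset.range M, (1 - PowerSeries.C (R := Rw) (ι q ^ j) * PowerSeries.X))
      = (-1 : Rw) ^ a * ι (q ^ (Nat.choose a 2) * qbinom q M a) := by
  induction M with
  | zero =>
      intro a
      rw [Finset.prod_range_zero]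
      cases a with
      | zero => simp [qbinom_zero_right]
      | succ a =>
          rw [PowerSeries.coeff_one, if_neg (by omega), qbinom_eq_zero q (by omega : 0 < a + 1)]
          simp
  | succ M ih =>
      intro a
      rw [Finset.prod_range_succ, mul_sub, mul_one, map_sub]
      have h : (∏ j ∈ Finset.range M, (1 - PowerSeries.C (R := Rw) (ι q ^ j) * PowerSeries.X)) *
          (PowerSeries.C (R := Rw) (ι q ^ M) * PowerSeries.X)
          = (PowerSeries.C (R := Rw) (ι q ^ M) *
              ∏ j ∈ Finset.range M, (1 - PowerSeries.C (R := Rw) (ι q ^ j) * PowerSeries.X)) *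
            PowerSeries.X := by ring
      rw [h]
      cases a with
      | zero =>
          rw [PowerSeries.coeff_zero_mul_X, sub_zero, ih 0]
          simp [qbinom_zero_right]
      | succ a =>
          rw [PowerSeries.coeff_succ_mul_X, PowerSeries.coeff_C_mul, ih (a+1), ih a]
          have hpas : q ^ (Nat.choose (a+1) 2) * qbinom q (M+1) (a+1)
              = q ^ (Nat.choose (a+1) 2) * qbinom q M (a+1)
                + q ^ M * (q ^ (Nat.choose a 2) * qbinom q M a) := by
            rcases le_or_gt a M with hle | hgt
            · have hch : Nat.choose (a+1) 2 = a + Nat.choose a 2 := by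
                rw [Nat.choose_succ_succ, Nat.choose_one_right]
              have e : Nat.choose (a+1) 2 + (M - a) = M + Nat.choose a 2 := by omega
              rw [qbinom_pascalB hxq M a, mul_add, ← mul_assoc (q ^ (Nat.choose (a+1) 2)),
                ← pow_add, e, pow_add]
              ring
            · rw [qbinom_eq_zero q hgt, qbinom_eq_zero q (show M < a + 1 by omega),
                qbinom_eq_zero q (show M + 1 < a + 1 by omega)]
              ring
          have hpas' := congrArg ι hpas
          simp only [map_add, map_mul, map_pow] at hpas' ⊢
          linear_combination ((-1 : Rw) ^ a) * hpas'

lemma cube_factor {S : Type*} [CommRing S] (w c x : S) (h : w^2 + w + 1 = 0) :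
    (1 - c*x) * (1 - w*c*x) * (1 - w^2*c*x) = 1 - c^3*x^3 := by
  linear_combination (-(c*x) + c^2*x^2*w - c^3*x^3*(w-1)) * h

lemma hωC : (PowerSeries.C (R := Rw) ω)^2 + PowerSeries.C (R := Rw) ω + 1 = 0 := by
  rw [← map_pow, ← map_add, ← map_one (PowerSeries.C (R := Rw)), ← map_add, hω, map_zero]

lemma factorization3 (m : ℕ) :
    (∏ j ∈ Finset.range (m+1), (1 - PowerSeries.C (R := Rw) (ι q ^ j) * PowerSeries.X)) *
    (∏ j ∈ Finset.range (m+1), (1 - PowerSeries.C (R := Rw) (ω * ι q ^ j) * PowerSeries.X)) *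
    (∏ j ∈ Finset.range (m+1), (1 - PowerSeries.C (R := Rw) (ω^2 * ι q ^ j) * PowerSeries.X))
    = ∏ j ∈ Finset.range (m+1), (1 - PowerSeries.C (R := Rw) (ι (q^3) ^ j) * PowerSeries.X ^ 3) := by
  rw [← Finset.prod_mul_distrib, ← Finset.prod_mul_distrib]
  apply Finset.prod_congr rfl
  intro j _
  have h := cube_factor (PowerSeries.C (R := Rw) ω) (PowerSeries.C (R := Rw) (ι q ^ j)) (PowerSeries.X) hωC
  have e1 : PowerSeries.C (R := Rw) (ω * ι q ^ j) = PowerSeries.C (R := Rw) ω * PowerSeries.C (R := Rw) (ι q ^ j) := by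
    rw [map_mul]
  have e2 : PowerSeries.C (R := Rw) (ω^2 * ι q ^ j) = (PowerSeries.C (R := Rw) ω)^2 * PowerSeries.C (R := Rw) (ι q ^ j) := by
    rw [map_mul, map_pow]
  have e3' : ι (q^3) ^ j = (ι q ^ j)^3 := by
    rw [map_pow, ← pow_mul, ← pow_mul, Nat.mul_comm]
  have e3 : PowerSeries.C (R := Rw) (ι (q^3) ^ j) = (PowerSeries.C (R := Rw) (ι q ^ j))^3 := by
    rw [e3', map_pow]
  rw [e1, e2, e3, ← h]

lemma KeyId (m : ℕ) :
    (∏ j ∈ Finset.range (m+1), (1 - PowerSeries.C (R := Rw) (ι q ^ j) * PowerSeries.X)) * Bser m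
    = Dser ω m * Dser (ω^2) m := by
  set F := ∏ j ∈ Finset.range (m+1), (1 - PowerSeries.C (R := Rw) (ι q ^ j) * PowerSeries.X) with hF
  set Pw := ∏ j ∈ Finset.range (m+1), (1 - PowerSeries.C (R := Rw) (ω * ι q ^ j) * PowerSeries.X) with hPw
  set Pw2 := ∏ j ∈ Finset.range (m+1), (1 - PowerSeries.C (R := Rw) (ω^2 * ι q ^ j) * PowerSeries.X) with hPw2
  set G3 := ∏ j ∈ Finset.range (m+1), (1 - PowerSeries.C (R := Rw) (ι (q^3) ^ j) * PowerSeries.X ^ 3) with hG3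
  have h2a : Dser ω m * Pw = 1 := Fact2a ω m
  have h2a' : Dser (ω^2) m * Pw2 = 1 := Fact2a (ω^2) m
  have h2b : Bser m * G3 = 1 := Fact2b m
  have hfac : F * Pw * Pw2 = G3 := factorization3 m
  calc F * Bser m = (F * Bser m) * (Dser ω m * Pw) * (Dser (ω^2) m * Pw2) := by
        rw [h2a, h2a']; ring
    _ = (F * Pw * Pw2) * Bser m * Dser ω m * Dser (ω^2) m := by ring
    _ = (Bser m * G3) * (Dser ω m * Dser (ω^2) m) := by rw [hfac]; ring
    _ = Dser ω m * Dser (ω^2) m := by rw [h2b]; ring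

lemma ω_pow_mod (t : ℕ) : ω ^ t = ω ^ (t % 3) := by
  conv_lhs => rw [← Nat.div_add_mod t 3]
  rw [pow_add, pow_mul, hω3, one_pow, one_mul]

lemma ω_add_pow (a b : ℕ) (hab : (a + b) % 3 = 0) :
    ω ^ a + ω ^ b = if a % 3 = 0 then (2 : Rw) else -1 := by
  rw [ω_pow_mod a, ω_pow_mod b]
  have hcase : a % 3 = 0 ∧ b % 3 = 0 ∨ a % 3 = 1 ∧ b % 3 = 2 ∨ a % 3 = 2 ∧ b % 3 = 1 := by omega
  rcases hcase with ⟨h1, h2⟩ | ⟨h1, h2⟩ | ⟨h1, h2⟩ <;> rw [h1, h2]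
  · norm_num
  · rw [if_neg (by omega)]; linear_combination hω
  · rw [if_neg (by omega)]; linear_combination hω

lemma c_eval (c : ℤ → ℚ) (hc : ∀ z : ℤ, (c z : ℝ) = Real.cos (z * Real.pi / 3)) (z : ℤ) :
    c z = (if z % 2 = 0 then (1:ℚ) else -1) * (if z % 3 = 0 then (1:ℚ) else -(1/2)) := by
  have key : (c z : ℝ) =
      (((if z % 2 = 0 then (1:ℚ) else -1) * (if z % 3 = 0 then (1:ℚ) else -(1/2)) : ℚ) : ℝ) := by
    rw [hc z]
    have hz : z = 6 * (z / 6) + z % 6 := (Int.mul_ediv_add_emod z 6).symm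
    have harg : (z : ℝ) * Real.pi / 3
        = ((z % 6 : ℤ) : ℝ) * Real.pi / 3 + (z / 6 : ℤ) * (2 * Real.pi) := by
      have : ((z : ℝ)) = 6 * ((z / 6 : ℤ) : ℝ) + ((z % 6 : ℤ) : ℝ) := by
        exact_mod_cast congrArg (fun t : ℤ => (t : ℝ)) hz
      rw [this]; ring
    rw [harg, Real.cos_add_int_mul_two_pi]
    have h0 : 0 ≤ z % 6 := Int.emod_nonneg z (by norm_num)
    have h6 : z % 6 < 6 := Int.emod_lt_of_pos z (by norm_num)
    set r := z % 6 with hr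
    interval_cases r
    · rw [if_pos (by omega), if_pos (by omega)]
      norm_num
    · rw [if_neg (by omega), if_neg (by omega)]
      push_cast
      rw [show (1:ℝ) * Real.pi / 3 = Real.pi / 3 by ring, Real.cos_pi_div_three]
      norm_num
    · rw [if_pos (by omega), if_neg (by omega)]
      push_cast
      rw [show (2:ℝ) * Real.pi / 3 = Real.pi - Real.pi / 3 by ring, Real.cos_pi_sub,
        Real.cos_pi_div_three]
      norm_num
    · rw [if_neg (by omega), if_pos (by omega)]
      push_cast
      rw [show (3:ℝ) * Real.pi / 3 = Real.pi by ring, Real.cos_pi]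
      norm_num
    · rw [if_pos (by omega), if_neg (by omega)]
      push_cast
      rw [show (4:ℝ) * Real.pi / 3 = 2 * Real.pi - (Real.pi - Real.pi / 3) by ring,
        Real.cos_two_pi_sub, Real.cos_pi_sub, Real.cos_pi_div_three]
      norm_num
    · rw [if_neg (by omega), if_neg (by omega)]
      push_cast
      rw [show (5:ℝ) * Real.pi / 3 = 2 * Real.pi - Real.pi / 3 by ring,
        Real.cos_two_pi_sub, Real.cos_pi_div_three]
      norm_num
  exact_mod_cast key

lemma neg_one_parity {S : Type*} [Monoid S] [HasDistribNeg S] (a b : ℕ) (h : a % 2 = b % 2) :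
    (-1 : S) ^ a = (-1 : S) ^ b := by
  rcases Nat.even_or_odd a with ha | ha
  · have hb : Even b := by rw [Nat.even_iff] at ha ⊢; omega
    rw [ha.neg_one_pow, hb.neg_one_pow]
  · have hb : Odd b := by rw [Nat.odd_iff] at ha ⊢; omega
    rw [ha.neg_one_pow, hb.neg_one_pow]

lemma sum_filter3 (n : ℕ) (f : ℕ → Rw) :
    (∑ k ∈ Finset.range (n+1), if 3 ∣ (n - k) then f k else 0)
      = ∑ j ∈ Finset.range (n/3 + 1), f (n - 3*j) := by
  rw [← Finset.sum_filter]
  refine Finset.sum_nbij' (fun k => (n - k)/3) (fun j => n - 3*j) ?_ ?_ ?_ ?_ ?_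
  · intro a ha
    simp only [Finset.mem_filter, Finset.mem_range] at ha
    simp only [Finset.mem_range]
    omega
  · intro a ha
    simp only [Finset.mem_range] at ha
    simp only [Finset.mem_filter, Finset.mem_range]
    omega
  · intro a ha
    simp only [Finset.mem_filter, Finset.mem_range] at ha
    show n - 3 * ((n - a)/3) = a
    omega
  · intro a ha
    simp only [Finset.mem_range] at ha
    show (n - (n - 3*a))/3 = a
    omega
  · intro a ha
    simp only [Finset.mem_filter, Finset.mem_range] at ha
    show f a = f (n - 3*((n - a)/3))
    congr 1
    omega

theorem stmt_14 (n m : ℕ) (c : ℤ → ℚ)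
    (hc : ∀ z : ℤ, (c z : ℝ) = Real.cos (z * Real.pi / 3)) :
    ∑ k ∈ Finset.range (n / 3 + 1),
      (-1 : RatFunc ℚ) ^ k * q ^ Nat.choose (n - 3 * k) 2 * qbinom q (m + 1) (n - 3 * k) *
        qbinom (q ^ 3) (m + k) m
    = ∑ k ∈ Finset.range (n + 1),
        algebraMap ℚ (RatFunc ℚ) (c (2 * (k : ℤ) - n)) * qbinom q (m + n - k) m *
          qbinom q (m + k) m := by
  classical
  have hL := c_eval c hc
  set F : PowerSeries Rw :=
    ∏ j ∈ Finset.range (m+1), (1 - PowerSeries.C (R := Rw) (ι q ^ j) * PowerSeries.X) with hFdef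
  -- Step 1 : LHS
  have hA : ι (∑ k ∈ Finset.range (n / 3 + 1),
      (-1 : RatFunc ℚ) ^ k * q ^ Nat.choose (n - 3 * k) 2 * qbinom q (m + 1) (n - 3 * k) *
        qbinom (q ^ 3) (m + k) m)
      = (-1:Rw)^n * PowerSeries.coeff (R := Rw) n (F * Bser m) := by
    rw [PowerSeries.coeff_mul, Finset.Nat.sum_antidiagonal_eq_sum_range_succ_mk, map_sum]
    have h1 : ∀ k ∈ Finset.range (n+1),
        PowerSeries.coeff (R := Rw) k F * PowerSeries.coeff (R := Rw) (n-k) (Bser m)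
          = (if 3 ∣ (n-k) then ((-1:Rw)^k * ι (q^(Nat.choose k 2) * qbinom q (m+1) k)
              * ι (qbinom (q^3) (m + (n-k)/3) m)) else 0) := by
      intro k _
      rw [hFdef, Fact1 (m+1) k]
      simp only [Bser, PowerSeries.coeff_mk]
      by_cases h3 : 3 ∣ (n-k)
      · rw [if_pos h3, if_pos h3]
      · rw [if_neg h3, if_neg h3, mul_zero]
    rw [Finset.sum_congr rfl h1, sum_filter3 n _, Finset.mul_sum]
    apply Finset.sum_congr rfl
    intro j hj
    have hj' : j < n/3 + 1 := Finset.mem_range.mp hj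
    have e1 : (n - (n - 3*j))/3 = j := by omega
    rw [e1]
    have hsign : (-1:Rw)^n * (-1:Rw)^(n - 3*j) = (-1:Rw)^j := by
      rw [← pow_add]; exact neg_one_parity _ _ (by omega)
    simp only [map_mul, map_pow, map_neg, map_one]
    rw [← hsign]
    ring
  -- Step 2 : coefficient of the right product
  have key : PowerSeries.coeff (R := Rw) n (F * Bser m)
      = PowerSeries.coeff (R := Rw) n (Dser ω m * Dser (ω^2) m) := by
    rw [hFdef, KeyId m]
  set B := PowerSeries.coeff (R := Rw) n (Dser ω m * Dser (ω^2) m) with hBdef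
  have hB2 : B = ∑ k ∈ Finset.range (n+1),
      ι (qbinom q (m + n - k) m * qbinom q (m + k) m) * ω^(2*n - k) := by
    rw [hBdef, PowerSeries.coeff_mul, Finset.Nat.sum_antidiagonal_eq_sum_range_succ_mk]
    apply Finset.sum_congr rfl
    intro k hk
    have hk' : k ≤ n := by have := Finset.mem_range.mp hk; omega
    simp only [Dser, PowerSeries.coeff_mk]
    have e1 : m + (n - k) = m + n - k := by omega
    have e2 : k + 2*(n-k) = 2*n - k := by omega
    rw [← pow_mul, e1, map_mul]
    calc ι (qbinom q (m + k) m) * ω^k * (ι (qbinom q (m + n - k) m) * ω^(2*(n-k)))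
        = ι (qbinom q (m + n - k) m) * ι (qbinom q (m + k) m) * (ω^k * ω^(2*(n-k))) := by ring
      _ = ι (qbinom q (m + n - k) m) * ι (qbinom q (m + k) m) * ω^(2*n - k) := by
          rw [← pow_add, e2]
  have hB1 : B = ∑ k ∈ Finset.range (n+1),
      ι (qbinom q (m + n - k) m * qbinom q (m + k) m) * ω^(n + k) := by
    rw [hB2, ← Finset.sum_range_reflect]
    apply Finset.sum_congr rfl
    intro k hk
    have hk' : k ≤ n := by have := Finset.mem_range.mp hk; omega
    simp only [Nat.add_sub_cancel]
    have e3 : m + n - (n - k) = m + k := by omega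
    have e4 : m + (n - k) = m + n - k := by omega
    have e5 : 2*n - (n - k) = n + k := by omega
    rw [e3, e5]
    congr 1
    rw [map_mul, map_mul]
    ring_nf
    try rw [e4]
    try ring
  -- Step 3 : RHS
  have hR : ι (2 * ∑ k ∈ Finset.range (n + 1),
        algebraMap ℚ (RatFunc ℚ) (c (2 * (k : ℤ) - n)) * qbinom q (m + n - k) m *
          qbinom q (m + k) m)
      = (-1:Rw)^n * (B + B) := by
    rw [map_mul, map_sum]
    nth_rewrite 1 [hB1]
    nth_rewrite 1 [hB2]
    rw [mul_add, Finset.mul_sum, Finset.mul_sum, Finset.mul_sum, ← Finset.sum_add_distrib]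
    simp only [map_mul, map_ofNat]
    apply Finset.sum_congr rfl
    intro k hk
    have hk' : k ≤ n := by have := Finset.mem_range.mp hk; omega
    have hcv : (2:ℚ) * c (2*(k:ℤ) - n)
        = (if (n + k) % 3 = 0 then ((-1:ℚ)^n * 2) else ((-1:ℚ)^n * (-1))) := by
      rw [hL (2*(k:ℤ) - n)]
      have h2 : ((2*(k:ℤ) - n) % 2 = 0) ↔ n % 2 = 0 := by omega
      have h3 : ((2*(k:ℤ) - n) % 3 = 0) ↔ (n + k) % 3 = 0 := by omega
      by_cases hn2 : n % 2 = 0 <;> by_cases hn3 : (n + k) % 3 = 0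
      · rw [if_pos (h2.mpr hn2), if_pos (h3.mpr hn3), if_pos hn3,
          (Nat.even_iff.mpr hn2).neg_one_pow]
        norm_num
      · rw [if_pos (h2.mpr hn2), if_neg (fun hh => hn3 (h3.mp hh)), if_neg hn3,
          (Nat.even_iff.mpr hn2).neg_one_pow]
        norm_num
      · rw [if_neg (fun hh => hn2 (h2.mp hh)), if_pos (h3.mpr hn3), if_pos hn3,
          (Nat.odd_iff.mpr (by omega)).neg_one_pow]
        norm_num
      · rw [if_neg (fun hh => hn2 (h2.mp hh)), if_neg (fun hh => hn3 (h3.mp hh)), if_neg hn3,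
          (Nat.odd_iff.mpr (by omega)).neg_one_pow]
        norm_num
    have hω2 : ω^(n+k) + ω^(2*n-k) = (if (n + k) % 3 = 0 then (2:Rw) else -1) := by
      apply ω_add_pow
      omega
    have hmap := congrArg (fun t : ℚ => ι (algebraMap ℚ (RatFunc ℚ) t)) hcv
    simp only [map_mul, map_pow, map_neg, map_one, map_ofNat, apply_ite
      (fun t : ℚ => ι (algebraMap ℚ (RatFunc ℚ) t))] at hmap
    -- goal : ι 2 * (ι (aM c) * ι qb1 * ι qb2) = ...
    calc (2 : Rw) * (ι (algebraMap ℚ (RatFunc ℚ) (c (2 * (k:ℤ) - n))) * ι (qbinom q (m + n - k) m)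
            * ι (qbinom q (m + k) m))
        = (2 * ι (algebraMap ℚ (RatFunc ℚ) (c (2 * (k:ℤ) - n)))) *
            (ι (qbinom q (m + n - k) m) * ι (qbinom q (m + k) m)) := by ring
      _ = ((-1:Rw)^n * (if (n + k) % 3 = 0 then (2:Rw) else -1)) *
            (ι (qbinom q (m + n - k) m) * ι (qbinom q (m + k) m)) := by
          rw [hmap]
          split_ifs <;> ring
      _ = ((-1:Rw)^n * (ω^(n+k) + ω^(2*n-k))) *
            (ι (qbinom q (m + n - k) m) * ι (qbinom q (m + k) m)) := by rw [hω2]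
      _ = (-1:Rw)^n * (ι (qbinom q (m + n - k) m) * ι (qbinom q (m + k) m) * ω^(n + k))
          + (-1:Rw)^n * (ι (qbinom q (m + n - k) m) * ι (qbinom q (m + k) m) * ω^(2*n - k)) := by
          ring
  -- Final combination
  have h2K : (2 : RatFunc ℚ) ≠ 0 := by
    intro h
    have h' : (algebraMap ℚ (RatFunc ℚ)) 2 = (algebraMap ℚ (RatFunc ℚ)) 0 := by
      rw [map_ofNat, map_zero, h]
    have := (algebraMap ℚ (RatFunc ℚ)).injective h'
    norm_num at this
  apply mul_left_cancel₀ h2K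
  apply ι_inj
  rw [hR, map_mul, hA, key]
  simp only [map_ofNat]
  ring
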